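/- arXiv:2008.08798 — 9 statements merged into one kernel-verified Lean document; each statement's English description precedes it below -/
import Mathlib

section
/- Let ε > 0 and define perturbed additive valuations v'_i by v'_i(g_j) = v_i(g_j) + ε·2^j. Then the perturbed instance is non-degenerate: for every agent i and all subsets S ≠ T of M, v'_i(S) ≠ v'_i(T), provided ε·2^(m+1) < δ where δ = min over agents i and sets S,T with v_i(S) ≠ v_i(T) of |v_i(S) − v_i(T)|. -/
open Finset

lemma pow_sum_inj {m : ℕ} : Function.Injective
    (fun S : Finset (Fin m) => ∑ j ∈ S, 2 ^ ((j : ℕ) + 1)) := by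
  intro S T h
  have hf : Function.Injective (fun j : Fin m => (j : ℕ) + 1) := by
    intro a b hab
    simpa [Fin.val_injective.eq_iff] using hab
  have hS : ∑ j ∈ S, 2 ^ ((j : ℕ) + 1) = ∑ i ∈ S.image (fun j : Fin m => (j : ℕ) + 1), 2 ^ i := by
    rw [Finset.sum_image (fun a _ b _ hab => hf hab)]
  have hT : ∑ j ∈ T, 2 ^ ((j : ℕ) + 1) = ∑ i ∈ T.image (fun j : Fin m => (j : ℕ) + 1), 2 ^ i := by
    rw [Finset.sum_image (fun a _ b _ hab => hf hab)]
  have : S.image (fun j : Fin m => (j : ℕ) + 1) = T.image (fun j : Fin m => (j : ℕ) + 1) :=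
    Finset.geomSum_injective le_rfl (by simpa only [← hS, ← hT] using h)
  exact Finset.image_injective hf this

lemma w_bound {m : ℕ} (S : Finset (Fin m)) :
    (0 : ℝ) ≤ ∑ j ∈ S, (2 : ℝ) ^ ((j : ℕ) + 1) ∧
    ∑ j ∈ S, (2 : ℝ) ^ ((j : ℕ) + 1) ≤ 2 ^ (m + 1) := by
  constructor
  · exact Finset.sum_nonneg fun j _ => by positivity
  · calc ∑ j ∈ S, (2 : ℝ) ^ ((j : ℕ) + 1)
        ≤ ∑ j : Fin m, (2 : ℝ) ^ ((j : ℕ) + 1) :=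
          Finset.sum_le_sum_of_subset_of_nonneg (Finset.subset_univ S)
            (fun j _ _ => by positivity)
      _ = ∑ j ∈ Finset.range m, (2 : ℝ) ^ (j + 1) :=
          Fin.sum_univ_eq_sum_range (fun j => (2 : ℝ) ^ (j + 1)) m
      _ ≤ ∑ j ∈ Finset.range (m + 1), (2 : ℝ) ^ j := by
          rw [Finset.sum_range_succ']
          have : (0:ℝ) ≤ (2:ℝ) ^ 0 := by norm_num
          linarith
      _ ≤ 2 ^ (m + 1) := by
          rw [geom_sum_eq (by norm_num : (2:ℝ) ≠ 1) (m + 1)]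
          nlinarith [pow_pos (by norm_num : (0:ℝ) < 2) (m+1)]

/-- The perturbed instance `v'_i(g_j) = v_i(g_j) + ε·2^j` (with `ε·2^(m+1) < δ`)
is non-degenerate: distinct bundles have distinct values for every agent. -/
theorem perturbed_instance_nondegenerate {N : Type*} {m : ℕ}
    (v : N → Fin m → ℝ) (ε δ : ℝ) (hε : 0 < ε)
    (hδ : ∀ i : N, ∀ S T : Finset (Fin m),
      (∑ g ∈ S, v i g) ≠ (∑ g ∈ T, v i g) →
      δ ≤ |(∑ g ∈ S, v i g) - (∑ g ∈ T, v i g)|)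
    (hεδ : ε * 2 ^ (m + 1) < δ)
    (v' : N → Fin m → ℝ)
    (hv' : ∀ i : N, ∀ j : Fin m, v' i j = v i j + ε * 2 ^ ((j : ℕ) + 1)) :
    ∀ i : N, ∀ S T : Finset (Fin m), S ≠ T →
      (∑ g ∈ S, v' i g) ≠ (∑ g ∈ T, v' i g) := by
  intro i S T hST heq
  set wS : ℝ := ∑ j ∈ S, (2 : ℝ) ^ ((j : ℕ) + 1) with hwS
  set wT : ℝ := ∑ j ∈ T, (2 : ℝ) ^ ((j : ℕ) + 1) with hwT
  have hS' : (∑ g ∈ S, v' i g) = (∑ g ∈ S, v i g) + ε * wS := by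
    simp only [hv', Finset.sum_add_distrib, hwS, Finset.mul_sum]
  have hT' : (∑ g ∈ T, v' i g) = (∑ g ∈ T, v i g) + ε * wT := by
    simp only [hv', Finset.sum_add_distrib, hwT, Finset.mul_sum]
  rw [hS', hT'] at heq
  by_cases hv : (∑ g ∈ S, v i g) = (∑ g ∈ T, v i g)
  · -- then wS = wT, contradicting injectivity
    have hweq : wS = wT := by
      have : ε * wS = ε * wT := by linarith
      exact mul_left_cancel₀ (ne_of_gt hε) this
    apply hST
    apply pow_sum_inj
    have castS : ((∑ j ∈ S, 2 ^ ((j : ℕ) + 1) : ℕ) : ℝ) = wS := by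
      push_cast [hwS]; rfl
    have castT : ((∑ j ∈ T, 2 ^ ((j : ℕ) + 1) : ℕ) : ℝ) = wT := by
      push_cast [hwT]; rfl
    have : ((∑ j ∈ S, 2 ^ ((j : ℕ) + 1) : ℕ) : ℝ) = ((∑ j ∈ T, 2 ^ ((j : ℕ) + 1) : ℕ) : ℝ) := by
      rw [castS, castT, hweq]
    exact_mod_cast this
  · have hd := hδ i S T hv
    have hb1 := w_bound S
    have hb2 := w_bound T
    have habs : |(∑ g ∈ S, v i g) - (∑ g ∈ T, v i g)| = ε * |wT - wS| := by
      have : (∑ g ∈ S, v i g) - (∑ g ∈ T, v i g) = ε * (wT - wS) := by linarith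
      rw [this, abs_mul, abs_of_pos hε]
    have hwb : |wT - wS| ≤ 2 ^ (m + 1) := by
      rw [abs_sub_le_iff]
      constructor <;> linarith [hb1.1, hb1.2, hb2.1, hb2.2]
    have : δ ≤ ε * 2 ^ (m + 1) := by
      calc δ ≤ ε * |wT - wS| := habs ▸ hd
        _ ≤ ε * 2 ^ (m + 1) := by nlinarith
    linarith
end

section
/- Let ε > 0 with ε·2^(m+1) < δ (δ as in the perturbation construction), and let v'_i be the perturbed valuations. If an allocation X is EFX with respect to the perturbed valuations v'_i, then X is EFX with respect to the original valuations v_i. -/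
open Finset

lemma range_pow_bound (m : ℕ) :
    (∑ k ∈ Finset.range m, (2:ℝ) ^ (k + 1)) < 2 ^ (m + 1) := by
  induction m with
  | zero => norm_num
  | succ n ih =>
    rw [Finset.sum_range_succ]
    have : (2:ℝ) ^ (n + 1 + 1) = 2 ^ (n + 1) + 2 ^ (n + 1) := by ring
    linarith

lemma pert_sum_bound {m : ℕ} (S : Finset (Fin m)) :
    0 ≤ (∑ j ∈ S, (2:ℝ) ^ ((j : ℕ) + 1)) ∧
    (∑ j ∈ S, (2:ℝ) ^ ((j : ℕ) + 1)) < 2 ^ (m + 1) := by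
  constructor
  · exact Finset.sum_nonneg fun j _ => by positivity
  · calc (∑ j ∈ S, (2:ℝ) ^ ((j : ℕ) + 1))
        ≤ ∑ j ∈ (Finset.univ : Finset (Fin m)), (2:ℝ) ^ ((j : ℕ) + 1) :=
          Finset.sum_le_sum_of_subset_of_nonneg (Finset.subset_univ S)
            (fun j _ _ => by positivity)
      _ = ∑ k ∈ Finset.range m, (2:ℝ) ^ (k + 1) :=
          Fin.sum_univ_eq_sum_range (fun k => (2:ℝ) ^ (k + 1)) m
      _ < 2 ^ (m + 1) := range_pow_bound m

/-- If an allocation `X` is EFX with respect to the perturbed valuations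
`v'_i(g_j) = v_i(g_j) + ε·2^j` (with `ε·2^(m+1) < δ`), then `X` is EFX with respect
to the original valuations `v_i`. -/
theorem efx_of_perturbed_efx {N : Type*} {m : ℕ}
    (v : N → Fin m → ℝ) (ε δ : ℝ) (hε : 0 < ε)
    (hδ : ∀ i : N, ∀ S T : Finset (Fin m),
      (∑ g ∈ S, v i g) ≠ (∑ g ∈ T, v i g) →
      δ ≤ |(∑ g ∈ S, v i g) - (∑ g ∈ T, v i g)|)
    (hεδ : ε * 2 ^ (m + 1) < δ)
    (v' : N → Fin m → ℝ)
    (hv' : ∀ i : N, ∀ j : Fin m, v' i j = v i j + ε * 2 ^ ((j : ℕ) + 1))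
    (X : N → Finset (Fin m))
    (hEFX' : ∀ i j : N, ∀ g ∈ X j,
      (∑ h ∈ (X j).erase g, v' i h) ≤ (∑ h ∈ X i, v' i h)) :
    ∀ i j : N, ∀ g ∈ X j,
      (∑ h ∈ (X j).erase g, v i h) ≤ (∑ h ∈ X i, v i h) := by
  intro i j g hg
  by_contra hlt
  push_neg at hlt
  set S := (X j).erase g
  set T := X i
  have hne : (∑ h ∈ S, v i h) ≠ (∑ h ∈ T, v i h) := by linarith
  have hd := hδ i S T hne
  have habs : δ ≤ (∑ h ∈ S, v i h) - (∑ h ∈ T, v i h) := by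
    rwa [abs_of_pos (by linarith)] at hd
  have hE := hEFX' i j g hg
  have hS : (∑ h ∈ S, v' i h) = (∑ h ∈ S, v i h) + ε * (∑ h ∈ S, (2:ℝ) ^ ((h:ℕ)+1)) := by
    simp only [hv', Finset.sum_add_distrib, Finset.mul_sum]
  have hT : (∑ h ∈ T, v' i h) = (∑ h ∈ T, v i h) + ε * (∑ h ∈ T, (2:ℝ) ^ ((h:ℕ)+1)) := by
    simp only [hv', Finset.sum_add_distrib, Finset.mul_sum]
  nlinarith [mul_le_mul_of_nonneg_left (pert_sum_bound S).2.le hε.le,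
    mul_le_mul_of_nonneg_left (pert_sum_bound T).2.le hε.le,
    mul_nonneg hε.le (pert_sum_bound S).1, mul_nonneg hε.le (pert_sum_bound T).1]
end

section
/- Let X be an EFX allocation whose envy-graph E_X contains a directed cycle. Then there exists another EFX allocation Y such that the envy-graph E_Y is acyclic and Y Pareto dominates X. -/
open Finset

/-- From any closed walk along a relation `r`, extract a closed walk with no repeated
vertices (an injective cycle). -/
lemma extract_inj_cycle {N : Type*} (r : N → N → Prop) :
    ∀ k, ∀ c : Fin (k + 1) → N, (∀ t, r (c t) (c (t + 1))) →
      ∃ m, ∃ d : Fin (m + 1) → N, Function.Injective d ∧ ∀ t, r (d t) (d (t + 1)) := by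
  intro k
  induction k using Nat.strong_induction_on with
  | _ k ih =>
    intro c hc
    by_cases hinj : Function.Injective c
    · exact ⟨k, c, hinj, hc⟩
    · simp only [Function.Injective, not_forall] at hinj
      obtain ⟨a, b, hab, hne⟩ := hinj
      -- wlog a.val < b.val
      suffices hmain : ∀ a b : Fin (k + 1), c a = c b → a.val < b.val →
          ∃ m, ∃ d : Fin (m + 1) → N, Function.Injective d ∧ ∀ t, r (d t) (d (t + 1)) by
        rcases lt_or_gt_of_ne (fun h : a.val = b.val => hne (Fin.ext h)) with h | h
        · exact hmain a b hab h
        · exact hmain b a hab.symm h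
      clear hab hne a b
      intro a b hab h
      have hbk : b.val ≤ k := Nat.lt_succ_iff.mp b.isLt
      have hk1 : 1 ≤ k := by omega
      set m : ℕ := b.val - a.val - 1 with hm
      have hmk : m < k := by omega
      have hlt : ∀ t : Fin (m + 1), a.val + t.val < k + 1 := by
        intro t; have := t.isLt; omega
      set d : Fin (m + 1) → N := fun t => c ⟨a.val + t.val, hlt t⟩ with hd
      have hdc : ∀ t, r (d t) (d (t + 1)) := by
        intro t
        by_cases htm : t.val = m
        · -- last step: from c ⟨b-1⟩ to c b = c a = d 0
          have ht1 : (t + 1).val = 0 := by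
            have : t = Fin.last m := Fin.ext htm
            rw [this, Fin.last_add_one]
            rfl
          have hb1 : a.val + t.val = b.val - 1 := by omega
          have e1 : ((⟨a.val + t.val, hlt t⟩ : Fin (k + 1)) + 1) = b := by
            apply Fin.ext
            rw [Fin.val_add_one_of_lt]
            · show a.val + t.val + 1 = b.val; omega
            · show a.val + t.val < k; omega
          have := hc ⟨a.val + t.val, hlt t⟩
          rw [e1] at this
          have e2 : d (t + 1) = c b := by
            show c _ = c b
            rw [← hab]
            congr 1
            apply Fin.ext
            simp [ht1]
          rw [e2]
          exact this
        · have htm' : t.val < m := lt_of_le_of_ne (Nat.lt_succ_iff.mp t.isLt) htm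
          have ht1 : (t + 1).val = t.val + 1 :=
            Fin.val_add_one_of_lt (by exact htm')
          have e1 : ((⟨a.val + t.val, hlt t⟩ : Fin (k + 1)) + 1) =
              ⟨a.val + (t + 1).val, hlt (t + 1)⟩ := by
            apply Fin.ext
            rw [Fin.val_add_one_of_lt]
            · show a.val + t.val + 1 = a.val + (t + 1).val; omega
            · show a.val + t.val < k; omega
          have := hc ⟨a.val + t.val, hlt t⟩
          rw [e1] at this
          exact this
      exact ih m hmk d hdc

/-- A permutation rotating along an injective cycle and fixing everything else. -/
lemma rotate_perm {N : Type*} [Fintype N] [DecidableEq N] {m : ℕ}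
    (d : Fin (m + 1) → N) (hinj : Function.Injective d) :
    ∃ ρ : Equiv.Perm N, (∀ t, ρ (d t) = d (t + 1)) ∧
      ∀ i, (∀ t, d t ≠ i) → ρ i = i := by
  refine ⟨(finRotate (m + 1)).viaFintypeEmbedding ⟨d, hinj⟩, fun t => ?_, fun i hi => ?_⟩
  · have := Equiv.Perm.viaFintypeEmbedding_apply_image (finRotate (m + 1)) ⟨d, hinj⟩ t
    simpa using this
  · apply Equiv.Perm.viaFintypeEmbedding_apply_notMem_range
    rintro ⟨t, ht⟩
    exact hi t ht

/-- If `X` is an EFX allocation whose envy-graph contains a directed cycle, then there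
is an EFX allocation `Y` (a reallocation of the same items) whose envy-graph is acyclic
and which Pareto dominates `X`. -/
theorem efx_cycle_elimination {N ι : Type*} [Fintype N] [DecidableEq ι]
    (v : N → Finset ι → ℝ) (X : N → Finset ι)
    (hdisj : ∀ i j : N, i ≠ j → Disjoint (X i) (X j))
    (hEFX : ∀ i j : N, ∀ g ∈ X j, v i ((X j).erase g) ≤ v i (X i))
    (hcyc : ∃ (k : ℕ) (c : Fin (k + 1) → N),
      ∀ t : Fin (k + 1), v (c t) (X (c t)) < v (c t) (X (c (t + 1)))) :
    ∃ Y : N → Finset ι,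
      (∀ i j : N, i ≠ j → Disjoint (Y i) (Y j)) ∧
      Finset.univ.biUnion Y = Finset.univ.biUnion X ∧
      (∀ i j : N, ∀ g ∈ Y j, v i ((Y j).erase g) ≤ v i (Y i)) ∧
      (¬ ∃ (k : ℕ) (c : Fin (k + 1) → N),
        ∀ t : Fin (k + 1), v (c t) (Y (c t)) < v (c t) (Y (c (t + 1)))) ∧
      (∀ i : N, v i (X i) ≤ v i (Y i)) ∧ (∃ j : N, v j (X j) < v j (Y j)) := by
  classical
  -- the set of "Pareto-improving" reallocations (as permutations)
  set S : Finset (Equiv.Perm N) :=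
    Finset.univ.filter (fun σ => ∀ i, v i (X i) ≤ v i (X (σ i))) with hS
  have h1S : (1 : Equiv.Perm N) ∈ S := by simp [hS]
  obtain ⟨σ, hσS, hσmax⟩ :=
    S.exists_max_image (fun σ => ∑ i, v i (X (σ i))) ⟨1, h1S⟩
  have hσ : ∀ i, v i (X i) ≤ v i (X (σ i)) := by
    simpa [hS] using hσS
  refine ⟨fun i => X (σ i), ?_, ?_, ?_, ?_, hσ, ?_⟩
  · -- disjointness
    intro i j hij
    exact hdisj _ _ (fun h => hij (σ.injective h))
  · -- same items
    ext x
    simp only [Finset.mem_biUnion, Finset.mem_univ, true_and]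
    constructor
    · rintro ⟨i, hi⟩; exact ⟨σ i, hi⟩
    · rintro ⟨i, hi⟩; exact ⟨σ⁻¹ i, by simpa using hi⟩
  · -- EFX
    intro i j g hg
    exact (hEFX i (σ j) g hg).trans (hσ i)
  · -- acyclicity of the envy graph of Y
    rintro ⟨k, c, hc⟩
    obtain ⟨m, d, hdinj, hd⟩ :=
      extract_inj_cycle (fun i j => v i (X (σ i)) < v i (X (σ j))) k c hc
    obtain ⟨ρ, hρ1, hρ2⟩ := rotate_perm d hdinj
    have hτS : σ * ρ ∈ S := by
      simp only [hS, Finset.mem_filter, Finset.mem_univ, true_and]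
      intro i
      by_cases hi : ∃ t, d t = i
      · obtain ⟨t, rfl⟩ := hi
        have : ρ (d t) = d (t + 1) := hρ1 t
        calc v (d t) (X (d t)) ≤ v (d t) (X (σ (d t))) := hσ _
          _ ≤ v (d t) (X (σ (d (t + 1)))) := le_of_lt (hd t)
          _ = v (d t) (X ((σ * ρ) (d t))) := by
              simp [Equiv.Perm.mul_apply, this]
      · push_neg at hi
        have : ρ i = i := hρ2 i hi
        simpa [Equiv.Perm.mul_apply, this] using hσ i
    have hsum : ∑ i, v i (X (σ i)) < ∑ i, v i (X ((σ * ρ) i)) := by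
      apply Finset.sum_lt_sum
      · intro i _
        by_cases hi : ∃ t, d t = i
        · obtain ⟨t, rfl⟩ := hi
          simpa [Equiv.Perm.mul_apply, hρ1 t] using le_of_lt (hd t)
        · push_neg at hi
          simp [Equiv.Perm.mul_apply, hρ2 i hi]
      · refine ⟨d 0, Finset.mem_univ _, ?_⟩
        simpa [Equiv.Perm.mul_apply, hρ1 0] using hd 0
    exact absurd (hσmax _ hτS) (not_le.mpr hsum)
  · -- strict Pareto improvement for some agent
    by_contra hcon
    push_neg at hcon
    obtain ⟨k₀, c₀, hc₀⟩ := hcyc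
    obtain ⟨m₀, d₀, hd₀inj, hd₀⟩ :=
      extract_inj_cycle (fun i j => v i (X i) < v i (X j)) k₀ c₀ hc₀
    obtain ⟨ρ₀, hρ₀1, hρ₀2⟩ := rotate_perm d₀ hd₀inj
    have hρ₀S : ρ₀ ∈ S := by
      simp only [hS, Finset.mem_filter, Finset.mem_univ, true_and]
      intro i
      by_cases hi : ∃ t, d₀ t = i
      · obtain ⟨t, rfl⟩ := hi
        rw [hρ₀1 t]; exact le_of_lt (hd₀ t)
      · push_neg at hi
        rw [hρ₀2 i hi]
    have hsum0 : ∑ i, v i (X i) < ∑ i, v i (X (ρ₀ i)) := by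
      apply Finset.sum_lt_sum
      · intro i _
        by_cases hi : ∃ t, d₀ t = i
        · obtain ⟨t, rfl⟩ := hi
          rw [hρ₀1 t]; exact le_of_lt (hd₀ t)
        · push_neg at hi
          rw [hρ₀2 i hi]
      · exact ⟨d₀ 0, Finset.mem_univ _, by rw [hρ₀1 0]; exact hd₀ 0⟩
    have h1 : ∑ i, v i (X (σ i)) ≤ ∑ i, v i (X i) :=
      Finset.sum_le_sum (fun i _ => hcon i)
    have h2 := hσmax _ hρ₀S
    linarith
end

section
/- Let X be a partial EFX allocation with unallocated item g such that the envy-graph E_X is acyclic, and suppose for every agent i there exists an agent j who would EFX envy i if i were given X_i ∪ {g}. If E_X has exactly one source, then there exists an EFX allocation Y Pareto dominating X. -/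
open Finset

/-- Additive bundle value. -/
def val {ι : Type*} (v : ι → ℝ) (S : Finset ι) : ℝ := ∑ g ∈ S, v g

/-- `i` envies `j` under allocation `X`. -/
def Envies {N ι : Type*} (v : N → ι → ℝ) (X : N → Finset ι) (i j : N) : Prop :=
  val (v i) (X i) < val (v i) (X j)

/-- Let `X` be a partial EFX allocation with unallocated item `g`, in a non-degenerate
additive instance, such that the envy-graph is acyclic and for every agent `i` some
agent `j` would EFX envy `i` if `i` were given `X_i ∪ {g}`. If the envy-graph has
exactly one source, then there is an EFX allocation `Y` Pareto dominating `X`. -/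
theorem one_source_pareto_improvement {N ι : Type*} [Fintype N] [DecidableEq ι]
    (v : N → ι → ℝ) (hnn : ∀ i g, 0 ≤ v i g)
    (hnd : ∀ i : N, ∀ S T : Finset ι, S ≠ T → val (v i) S ≠ val (v i) T)
    (M' : Finset ι) (X : N → Finset ι)
    (hXsub : ∀ i : N, X i ⊆ M')
    (hdisj : ∀ i j : N, i ≠ j → Disjoint (X i) (X j))
    (hEFX : ∀ i j : N, ∀ h ∈ X j, val (v i) ((X j).erase h) ≤ val (v i) (X i))
    (g : ι) (hg : g ∉ M')
    (hacyc : ¬ ∃ (k : ℕ) (c : Fin (k + 1) → N),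
      ∀ t : Fin (k + 1), Envies v X (c t) (c (t + 1)))
    (henvy : ∀ i : N, ∃ j : N, ∃ h ∈ insert g (X i),
      val (v j) (X j) < val (v j) ((insert g (X i)).erase h))
    (hsource : ∃! s : N, ∀ j : N, ¬ Envies v X j s) :
    ∃ Y : N → Finset ι,
      (∀ k : N, Y k ⊆ insert g M') ∧
      (∀ k l : N, k ≠ l → Disjoint (Y k) (Y l)) ∧
      (∀ k l : N, ∀ h ∈ Y l, val (v k) ((Y l).erase h) ≤ val (v k) (Y k)) ∧
      (∀ k : N, val (v k) (X k) ≤ val (v k) (Y k)) ∧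
      (∃ k : N, val (v k) (X k) < val (v k) (Y k)) := by
  classical
  obtain ⟨s, hs, huniq⟩ := hsource
  set R : N → N → Prop := fun a b => Envies v X a b with hRdef
  -- extract an explicit chain from a transitive-closure step
  have chain : ∀ a b : N, Relation.TransGen R a b →
      ∃ n : ℕ, ∃ f : ℕ → N, f 0 = a ∧ f (n+1) = b ∧ ∀ i ≤ n, R (f i) (f (i+1)) := by
    intro a b h
    induction h with
    | @single b hab =>
        refine ⟨0, fun i => if i = 0 then a else b, by simp, by simp, ?_⟩
        intro i hi
        have : i = 0 := Nat.le_zero.mp hi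
        subst this
        simpa using hab
    | @tail b c hab hbc ih =>
        obtain ⟨n, f, hf0, hfn, hchain⟩ := ih
        refine ⟨n+1, fun i => if i ≤ n+1 then f i else c, ?_, ?_, ?_⟩
        · simp [hf0]
        · simp
        · intro i hi
          rcases Nat.lt_or_ge i (n+1) with h1 | h1
          · have h2 : i ≤ n := by omega
            simp only [if_pos (by omega : i ≤ n+1), if_pos (by omega : i+1 ≤ n+1)]
            exact hchain i h2
          · have hi' : i = n+1 := by omega
            subst hi'
            simp only [if_pos le_rfl, if_neg (by omega : ¬ n+1+1 ≤ n+1)]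
            rw [hfn]; exact hbc
  -- no cycles: the transitive closure of the envy relation is irreflexive
  have irr : ∀ a, ¬ Relation.TransGen R a a := by
    intro a haa
    obtain ⟨n, f, hf0, hfn, hchain⟩ := chain a a haa
    refine hacyc ⟨n, fun t => f t.val, ?_⟩
    intro t
    have hval : ((t + 1 : Fin (n+1))).val = (t.val + 1 % (n+1)) % (n+1) := by
      rw [Fin.val_add, Fin.val_one']
    have key : f ((t.val + 1 % (n+1)) % (n+1)) = f (t.val + 1) := by
      rcases eq_or_lt_of_le (Nat.lt_succ_iff.mp t.isLt) with heq | hlt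
      · have h1 : (t.val + 1 % (n+1)) % (n+1) = 0 := by
          rcases Nat.eq_zero_or_pos n with h0 | h0
          · subst h0; simp_all
          · have h2 : 1 % (n+1) = 1 := Nat.mod_eq_of_lt (by omega)
            rw [h2, heq, Nat.mod_self]
        rw [h1, hf0, heq, hfn]
      · have h2 : 1 % (n+1) = 1 := Nat.mod_eq_of_lt (by omega)
        rw [h2, Nat.mod_eq_of_lt (by omega)]
    have := hchain t.val (Nat.lt_succ_iff.mp t.isLt)
    show Envies v X (f t.val) (f ((t + 1 : Fin (n+1))).val)
    rw [hval, key]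
    exact this
  haveI : IsTrans N (Relation.TransGen R) := ⟨fun a b c h1 h2 => h1.trans h2⟩
  haveI : IsIrrefl N (Relation.TransGen R) := ⟨irr⟩
  have wfT : WellFounded (Relation.TransGen R) :=
    Finite.wellFounded_of_trans_of_irrefl _
  have wfR : WellFounded R :=
    Subrelation.wf (fun {x y} h => Relation.TransGen.single h) wfT
  -- every agent is reachable from the unique source
  have reach : ∀ t : N, Relation.ReflTransGen R s t := by
    intro t
    refine wfR.induction t ?_
    intro x ih
    by_cases hx : x = s
    · subst hx; exact Relation.ReflTransGen.refl
    · have hnotsrc : ¬ ∀ j : N, ¬ Envies v X j x := fun hc => hx (huniq x hc)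
      push_neg at hnotsrc
      obtain ⟨a, ha⟩ := hnotsrc
      exact (ih a ha).tail ha
  -- the champion: a minimal envied subset B of insert g (X s), envied by t
  set P : Finset ι → Prop := fun S => ∃ a : N, val (v a) (X a) < val (v a) S with hPdef
  have hne : ((insert g (X s)).powerset.filter P).Nonempty := by
    obtain ⟨j, h, hh, hlt⟩ := henvy s
    exact ⟨(insert g (X s)).erase h,
      mem_filter.mpr ⟨mem_powerset.mpr (erase_subset _ _), j, hlt⟩⟩
  obtain ⟨B, hBmem, hBmin⟩ := Finset.exists_min_image _ Finset.card hne
  rw [mem_filter, mem_powerset] at hBmem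
  obtain ⟨hBsub, t, htB⟩ := hBmem
  have hBerase : ∀ h' ∈ B, ∀ a : N, val (v a) (B.erase h') ≤ val (v a) (X a) := by
    intro h' hh' a
    by_contra hcon
    push_neg at hcon
    have hmem : B.erase h' ∈ (insert g (X s)).powerset.filter P :=
      mem_filter.mpr ⟨mem_powerset.mpr ((erase_subset _ _).trans hBsub), a, hcon⟩
    have h1 := hBmin _ hmem
    have h2 : (B.erase h').card = B.card - 1 := card_erase_of_mem hh'
    have h3 : 0 < B.card := card_pos.mpr ⟨h', hh'⟩
    omega
  -- permutation shifting bundles along a path from s to t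
  have hperm : ∀ t' : N, Relation.ReflTransGen R s t' → ∃ σ : Equiv.Perm N, σ t' = s ∧
      ∀ a : N, a ≠ t' → σ a = a ∨ (Envies v X a (σ a) ∧ Relation.ReflTransGen R a t') := by
    intro t' h
    induction h with
    | refl => exact ⟨1, rfl, fun a _ => Or.inl rfl⟩
    | @tail b c hsb hbc ih =>
      obtain ⟨σ, hσb, hinv⟩ := ih
      have hbc' : b ≠ c := by
        rintro rfl
        exact irr b (Relation.TransGen.single hbc)
      have hσc : σ c = c := by
        rcases hinv c (Ne.symm hbc') with h1 | ⟨h1, h2⟩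
        · exact h1
        · exact absurd (Relation.TransGen.tail' h2 hbc) (irr c)
      refine ⟨(Equiv.swap b c).trans σ, ?_, ?_⟩
      · simp [Equiv.swap_apply_right, hσb]
      · intro a hac
        by_cases hab : a = b
        · subst hab
          have heq : ((Equiv.swap a c).trans σ) a = c := by
            simp [Equiv.swap_apply_left, hσc]
          rw [heq]
          exact Or.inr ⟨hbc, Relation.ReflTransGen.single hbc⟩
        · have heq : ((Equiv.swap b c).trans σ) a = σ a := by
            simp [Equiv.swap_apply_of_ne_of_ne hab hac]
          rw [heq]
          rcases hinv a hab with h1 | ⟨h1, h2⟩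
          · exact Or.inl h1
          · exact Or.inr ⟨h1, h2.tail hbc⟩
  obtain ⟨σ, hσt, hinv⟩ := hperm t (reach t)
  set Y : N → Finset ι := fun a => if a = t then B else X (σ a) with hYdef
  have hYt : Y t = B := by simp [hYdef]
  have hYne : ∀ a : N, a ≠ t → Y a = X (σ a) := by
    intro a ha; simp [hYdef, ha]
  -- weak Pareto improvement
  have himp : ∀ k : N, val (v k) (X k) ≤ val (v k) (Y k) := by
    intro k
    by_cases hk : k = t
    · subst hk; rw [hYt]; exact le_of_lt htB
    · rw [hYne k hk]
      rcases hinv k hk with h1 | ⟨h1, _⟩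
      · rw [h1]
      · exact le_of_lt h1
  have hdisjB : ∀ c : N, c ≠ s → Disjoint B (X c) := by
    intro c hc
    refine Finset.disjoint_left.mpr ?_
    intro x hxB hxc
    rcases mem_insert.mp (hBsub hxB) with rfl | hxs
    · exact hg (hXsub c hxc)
    · exact (Finset.disjoint_left.mp (hdisj s c (Ne.symm hc))) hxs hxc
  have hσne : ∀ l : N, l ≠ t → σ l ≠ s := by
    intro l hl hc
    exact hl (σ.injective (hc.trans hσt.symm))
  refine ⟨Y, ?_, ?_, ?_, himp, ⟨t, ?_⟩⟩
  · intro k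
    by_cases hk : k = t
    · subst hk; rw [hYt]
      exact hBsub.trans (insert_subset_insert _ (hXsub s))
    · rw [hYne k hk]
      exact (hXsub _).trans (subset_insert _ _)
  · intro k l hkl
    by_cases hk : k = t
    · subst hk
      have hl : l ≠ k := fun h => hkl h.symm
      rw [hYt, hYne l hl]
      exact hdisjB (σ l) (hσne l hl)
    · by_cases hl : l = t
      · subst hl
        rw [hYt, hYne k hk]
        exact (hdisjB (σ k) (hσne k hk)).symm
      · rw [hYne k hk, hYne l hl]
        exact hdisj _ _ (fun hc => hkl (σ.injective hc))
  · intro k l h' hh'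
    have hk' := himp k
    by_cases hl : l = t
    · subst hl
      rw [hYt] at hh' ⊢
      exact le_trans (hBerase h' hh' k) hk'
    · rw [hYne l hl] at hh' ⊢
      exact le_trans (hEFX k (σ l) h' hh') hk'
  · rw [hYt]; exact htB
end

section
/- Let X be a partial EFX allocation with all bundles nonempty, in a non-degenerate two-type instance with additive valuations v_α and v_β, such that the envy-graph E_X has more than one source. Let α_0 be the agent of type α with the α-minimum bundle and β_0 the agent of type β with the β-minimum bundle. Then v_α(X_{α_0}) > v_α(X_{β_0}) and v_β(X_{β_0}) > v_β(X_{α_0}). -/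
open Finset

/-- In a non-degenerate two-type additive instance (at least two agents of each type),
if `X` is a partial EFX allocation with all bundles nonempty whose envy-graph has more
than one source, then the minimally endowed agents `α₀` of type α and `β₀` of type β
satisfy `v_α(X_{α₀}) > v_α(X_{β₀})` and `v_β(X_{β₀}) > v_β(X_{α₀})`. -/
theorem min_agents_do_not_envy_each_other {N ι : Type*} [Fintype N] [DecidableEq ι]
    (type : N → Bool) (va vb : ι → ℝ)
    (hcarda : 2 ≤ (Finset.univ.filter fun i : N => type i = true).card)
    (hcardb : 2 ≤ (Finset.univ.filter fun i : N => type i = false).card)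
    (hnda : ∀ S T : Finset ι, S ≠ T → val va S ≠ val va T)
    (hndb : ∀ S T : Finset ι, S ≠ T → val vb S ≠ val vb T)
    (v : N → ι → ℝ) (hv : ∀ i : N, v i = if type i then va else vb)
    (X : N → Finset ι)
    (hdisj : ∀ i j : N, i ≠ j → Disjoint (X i) (X j))
    (hEFX : ∀ i j : N, ∀ h ∈ X j, val (v i) ((X j).erase h) ≤ val (v i) (X i))
    (hne : ∀ i : N, (X i).Nonempty)
    (a0 b0 : N) (ha0 : type a0 = true) (hb0 : type b0 = false)
    (ha0min : ∀ i : N, type i = true → val va (X a0) ≤ val va (X i))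
    (hb0min : ∀ i : N, type i = false → val vb (X b0) ≤ val vb (X i))
    (hsources : ∃ s1 s2 : N, s1 ≠ s2 ∧
      (∀ j : N, ¬ Envies v X j s1) ∧ (∀ j : N, ¬ Envies v X j s2)) :
    val va (X b0) < val va (X a0) ∧ val vb (X a0) < val vb (X b0) := by
  obtain ⟨s1, s2, hss, hs1, hs2⟩ := hsources
  have hXne : ∀ i j : N, i ≠ j → X i ≠ X j := by
    intro i j hij heq
    have := hdisj i j hij
    rw [heq] at this
    exact (hne j).ne_empty ((Finset.disjoint_self_iff_empty _).mp this)
  have hva : v a0 = va := by rw [hv a0, ha0]; rfl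
  have hvb : v b0 = vb := by rw [hv b0, hb0]; rfl
  have hab : a0 ≠ b0 := by intro h; rw [h, hb0] at ha0; exact Bool.noConfusion ha0
  -- only a0 or b0 can be a source
  have key : ∀ s : N, (∀ j : N, ¬ Envies v X j s) → s = a0 ∨ s = b0 := by
    intro s hs
    cases hts : type s with
    | true =>
      left
      by_contra hsa
      apply hs a0
      unfold Envies
      rw [hva]
      exact lt_of_le_of_ne (ha0min s hts) (hnda _ _ (hXne a0 s (Ne.symm hsa)))
    | false =>
      right
      by_contra hsb
      apply hs b0
      unfold Envies
      rw [hvb]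
      exact lt_of_le_of_ne (hb0min s hts) (hndb _ _ (hXne b0 s (Ne.symm hsb)))
  have hnoenvy_a0 : ∀ j : N, ¬ Envies v X j a0 := by
    rcases key s1 hs1 with h | h <;> rcases key s2 hs2 with h2 | h2
    · exact absurd (h.trans h2.symm) hss
    · rwa [h] at hs1
    · rwa [h2] at hs2
    · exact absurd (h.trans h2.symm) hss
  have hnoenvy_b0 : ∀ j : N, ¬ Envies v X j b0 := by
    rcases key s1 hs1 with h | h <;> rcases key s2 hs2 with h2 | h2
    · exact absurd (h.trans h2.symm) hss
    · rwa [h2] at hs2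
    · rwa [h] at hs1
    · exact absurd (h.trans h2.symm) hss
  constructor
  · have := hnoenvy_b0 a0
    unfold Envies at this
    rw [hva] at this
    exact lt_of_le_of_ne (not_lt.mp this) (hnda _ _ (hXne b0 a0 hab.symm))
  · have := hnoenvy_a0 b0
    unfold Envies at this
    rw [hvb] at this
    exact lt_of_le_of_ne (not_lt.mp this) (hndb _ _ (hXne a0 b0 hab))
end

section
/- Let X be a partial EFX allocation with unallocated item g in a non-degenerate two-type additive instance (|N_α|, |N_β| ≥ 2) with no self-champions, and with more than one source in the envy-graph. Then α_0 is a most envious agent for X_{β_0} ∪ {g} and β_0 is a most envious agent for X_{α_0} ∪ {g}, i.e., α_0 ∈ A_X(X_{β_0} ∪ {g}) and β_0 ∈ A_X(X_{α_0} ∪ {g}). -/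
open Finset

/-- `i` is a most envious agent for the set `S` under allocation `X`: some minimum
preferred set `P ⊆ S` of `i` has cardinality minimal among all agents' minimum
preferred sets of `S`. -/
def MostEnvious {N ι : Type*} (v : N → ι → ℝ) (X : N → Finset ι) (S : Finset ι)
    (i : N) : Prop :=
  ∃ P ⊆ S, val (v i) (X i) < val (v i) P ∧
    ∀ k : N, ∀ Q ⊆ S, val (v k) (X k) < val (v k) Q → P.card ≤ Q.card

lemma val_lt_insert {ι : Type*} [DecidableEq ι] (w : ι → ℝ) (hnn : ∀ g, 0 ≤ w g)
    (hnd : ∀ S T : Finset ι, S ≠ T → val w S ≠ val w T) (g : ι) (T : Finset ι)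
    (hg : g ∉ T) : val w T < val w (insert g T) := by
  have h1 : val w (insert g T) = w g + val w T := Finset.sum_insert hg
  have h2 : val w T ≠ val w (insert g T) :=
    hnd _ _ (fun h => hg (h ▸ Finset.mem_insert_self g T))
  have := hnn g
  exact h2.lt_of_le (by rw [h1]; linarith)

lemma exists_min_envious {N ι : Type*} (v : N → ι → ℝ) (X : N → Finset ι)
    (S : Finset ι)
    (h : ∃ k : N, ∃ Q ⊆ S, val (v k) (X k) < val (v k) Q) :
    ∃ k : N, ∃ P ⊆ S, val (v k) (X k) < val (v k) P ∧
      ∀ k' : N, ∀ Q ⊆ S, val (v k') (X k') < val (v k') Q → P.card ≤ Q.card := by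
  set T : Set ℕ := {n | ∃ k : N, ∃ Q ⊆ S, val (v k) (X k) < val (v k) Q ∧ Q.card = n}
  have hT : T.Nonempty := by
    obtain ⟨k, Q, hQS, hQ⟩ := h
    exact ⟨Q.card, k, Q, hQS, hQ, rfl⟩
  obtain ⟨k, P, hPS, hP, hPc⟩ := Nat.sInf_mem hT
  refine ⟨k, P, hPS, hP, fun k' Q hQS hQ => ?_⟩
  rw [hPc]
  exact Nat.sInf_le ⟨k', Q, hQS, hQ, rfl⟩

lemma mostEnvious_transfer {N ι : Type*} (v : N → ι → ℝ) (X : N → Finset ι)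
    (S : Finset ι) (x0 y0 : N)
    (hY : val (v y0) (X y0) < val (v y0) S) (hS : S ⊆ S := Finset.Subset.refl S)
    (hdicho : ∀ k : N, (v k = v x0 ∧ val (v k) (X x0) ≤ val (v k) (X k)) ∨
      (v k = v y0 ∧ val (v k) (X y0) ≤ val (v k) (X k)))
    (hsc : ¬ MostEnvious v X S y0) :
    MostEnvious v X S x0 := by
  obtain ⟨k, P, hPS, hP, hmin⟩ := exists_min_envious v X S ⟨y0, S, hS, hY⟩
  rcases hdicho k with ⟨hk, hle⟩ | ⟨hk, hle⟩
  · refine ⟨P, hPS, ?_, hmin⟩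
    rw [← hk]
    exact lt_of_le_of_lt hle hP
  · exact absurd ⟨P, hPS, by rw [← hk]; exact lt_of_le_of_lt hle hP, hmin⟩ hsc

/-- In a non-degenerate two-type additive instance (at least two agents of each type),
if `X` is a partial EFX allocation with nonempty bundles, unallocated item `g`, no
self-champions, and more than one source in the envy-graph, then `α₀` is a most envious
agent for `X_{β₀} ∪ {g}` and `β₀` is a most envious agent for `X_{α₀} ∪ {g}`. -/
theorem min_agents_champion_each_other {N ι : Type*} [Fintype N] [DecidableEq ι]
    (type : N → Bool) (va vb : ι → ℝ)
    (hnna : ∀ g, 0 ≤ va g) (hnnb : ∀ g, 0 ≤ vb g)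
    (hcarda : 2 ≤ (Finset.univ.filter fun i : N => type i = true).card)
    (hcardb : 2 ≤ (Finset.univ.filter fun i : N => type i = false).card)
    (hnda : ∀ S T : Finset ι, S ≠ T → val va S ≠ val va T)
    (hndb : ∀ S T : Finset ι, S ≠ T → val vb S ≠ val vb T)
    (v : N → ι → ℝ) (hv : ∀ i : N, v i = if type i then va else vb)
    (X : N → Finset ι)
    (hdisj : ∀ i j : N, i ≠ j → Disjoint (X i) (X j))
    (hEFX : ∀ i j : N, ∀ h ∈ X j, val (v i) ((X j).erase h) ≤ val (v i) (X i))
    (hne : ∀ i : N, (X i).Nonempty)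
    (g : ι) (hg : ∀ i : N, g ∉ X i)
    (hsc : ∀ i : N, ¬ MostEnvious v X (insert g (X i)) i)
    (a0 b0 : N) (ha0 : type a0 = true) (hb0 : type b0 = false)
    (ha0min : ∀ i : N, type i = true → val va (X a0) ≤ val va (X i))
    (hb0min : ∀ i : N, type i = false → val vb (X b0) ≤ val vb (X i))
    (hsources : ∃ s1 s2 : N, s1 ≠ s2 ∧
      (∀ j : N, ¬ Envies v X j s1) ∧ (∀ j : N, ¬ Envies v X j s2)) :
    MostEnvious v X (insert g (X b0)) a0 ∧ MostEnvious v X (insert g (X a0)) b0 := by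
  have hva0 : v a0 = va := by rw [hv a0, ha0]; rfl
  have hvb0 : v b0 = vb := by rw [hv b0, hb0]; rfl
  have hdicho : ∀ k : N, (v k = v a0 ∧ val (v k) (X a0) ≤ val (v k) (X k)) ∨
      (v k = v b0 ∧ val (v k) (X b0) ≤ val (v k) (X k)) := by
    intro k
    rcases Bool.eq_false_or_eq_true (type k) with htk | htk
    · left
      have : v k = va := by rw [hv k, htk]; rfl
      rw [this, hva0]
      exact ⟨rfl, ha0min k htk⟩
    · right
      have : v k = vb := by rw [hv k, htk]; rfl
      rw [this, hvb0]
      exact ⟨rfl, hb0min k htk⟩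
  have hdicho' : ∀ k : N, (v k = v b0 ∧ val (v k) (X b0) ≤ val (v k) (X k)) ∨
      (v k = v a0 ∧ val (v k) (X a0) ≤ val (v k) (X k)) :=
    fun k => (hdicho k).symm
  constructor
  · refine mostEnvious_transfer v X (insert g (X b0)) a0 b0 ?_ (Finset.Subset.refl _)
      hdicho (hsc b0)
    rw [hvb0]
    exact val_lt_insert vb hnnb hndb g (X b0) (hg b0)
  · refine mostEnvious_transfer v X (insert g (X a0)) b0 a0 ?_ (Finset.Subset.refl _)
      hdicho' (hsc a0)
    rw [hva0]
    exact val_lt_insert va hnna hnda g (X a0) (hg a0)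
end

section
/- Define X'_{α_0} = (X_{α_0} ∪ P_X(α_0, X_{β_0} ∪ {g})) \ P_X(β_0, X_{α_0} ∪ {g}), X'_{β_0} = (X_{β_0} ∪ P_X(β_0, X_{α_0} ∪ {g})) \ P_X(α_0, X_{β_0} ∪ {g}), and X'_k = X_k otherwise. Under the standing assumptions (two-type additive non-degenerate instance, α_0 and β_0 champion each other, no self-champions, α_0 and β_0 are both sources), we have v_α(X'_{α_0}) > v_α(X_{α_0}) > v_α(X_{β_0}) > v_α(X'_{β_0}) and v_β(X'_{β_0}) > v_β(X_{β_0}) > v_β(X_{α_0}) > v_β(X'_{α_0}); in particular X' Pareto dominates X. -/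
open Finset

/-- `P` is a minimum preferred set of `S` for agent `i`, witnessing that `i` is a most
envious agent for `S`. -/
def MostEnviousWitness {N ι : Type*} (v : N → ι → ℝ) (X : N → Finset ι) (S : Finset ι)
    (i : N) (P : Finset ι) : Prop :=
  P ⊆ S ∧ val (v i) (X i) < val (v i) P ∧
    ∀ k : N, ∀ Q ⊆ S, val (v k) (X k) < val (v k) Q → P.card ≤ Q.card

/-- Exchanging the minimum preferred sets `Pa = P_X(α₀, X_{β₀} ∪ {g})` and
`Pb = P_X(β₀, X_{α₀} ∪ {g})` between `α₀` and `β₀` strictly improves both of their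
utilities: `v_α(X'_{α₀}) > v_α(X_{α₀}) > v_α(X_{β₀}) > v_α(X'_{β₀})` and
`v_β(X'_{β₀}) > v_β(X_{β₀}) > v_β(X_{α₀}) > v_β(X'_{α₀})`; in particular `X'` Pareto
dominates `X`. -/
theorem exchange_improves_both {N ι : Type*} [Fintype N] [DecidableEq N] [DecidableEq ι]
    (type : N → Bool) (va vb : ι → ℝ)
    (hnna : ∀ g, 0 ≤ va g) (hnnb : ∀ g, 0 ≤ vb g)
    (hcarda : 2 ≤ (Finset.univ.filter fun i : N => type i = true).card)
    (hcardb : 2 ≤ (Finset.univ.filter fun i : N => type i = false).card)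
    (hnda : ∀ S T : Finset ι, S ≠ T → val va S ≠ val va T)
    (hndb : ∀ S T : Finset ι, S ≠ T → val vb S ≠ val vb T)
    (v : N → ι → ℝ) (hv : ∀ i : N, v i = if type i then va else vb)
    (X : N → Finset ι)
    (hdisj : ∀ i j : N, i ≠ j → Disjoint (X i) (X j))
    (hEFX : ∀ i j : N, ∀ h ∈ X j, val (v i) ((X j).erase h) ≤ val (v i) (X i))
    (hne : ∀ i : N, (X i).Nonempty)
    (g : ι) (hg : ∀ i : N, g ∉ X i)
    (a0 b0 : N) (ha0 : type a0 = true) (hb0 : type b0 = false)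
    (ha0min : ∀ i : N, type i = true → val va (X a0) ≤ val va (X i))
    (hb0min : ∀ i : N, type i = false → val vb (X b0) ≤ val vb (X i))
    (hsc : ∀ i : N, ∀ P : Finset ι, ¬ MostEnviousWitness v X (insert g (X i)) i P)
    (ha0src : ∀ j : N, ¬ Envies v X j a0) (hb0src : ∀ j : N, ¬ Envies v X j b0)
    (Pa Pb : Finset ι)
    (hPa : MostEnviousWitness v X (insert g (X b0)) a0 Pa)
    (hPb : MostEnviousWitness v X (insert g (X a0)) b0 Pb)
    (X' : N → Finset ι)
    (hX'a : X' a0 = (X a0 ∪ Pa) \ Pb)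
    (hX'b : X' b0 = (X b0 ∪ Pb) \ Pa)
    (hX'k : ∀ k : N, k ≠ a0 → k ≠ b0 → X' k = X k) :
    val va (X a0) < val va (X' a0) ∧ val va (X b0) < val va (X a0) ∧
    val va (X' b0) < val va (X b0) ∧
    val vb (X b0) < val vb (X' b0) ∧ val vb (X a0) < val vb (X b0) ∧
    val vb (X' a0) < val vb (X a0) ∧
    ((∀ i : N, val (v i) (X i) ≤ val (v i) (X' i)) ∧
      ∃ j : N, val (v j) (X j) < val (v j) (X' j)) := by
  have hva0 : v a0 = va := by rw [hv a0, ha0]; rfl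
  have hvb0 : v b0 = vb := by rw [hv b0, hb0]; rfl
  have hab : a0 ≠ b0 := by
    intro h; rw [h, hb0] at ha0; exact Bool.noConfusion ha0
  -- source facts
  have hBA : val va (X b0) ≤ val va (X a0) := by
    have := hb0src a0
    rw [Envies, hva0] at this
    exact not_lt.mp this
  have hAB : val vb (X a0) ≤ val vb (X b0) := by
    have := ha0src b0
    rw [Envies, hvb0] at this
    exact not_lt.mp this
  have hPaA : val va (X a0) < val va Pa := by
    have := hPa.2.1; rwa [hva0] at this
  have hPbB : val vb (X b0) < val vb Pb := by
    have := hPb.2.1; rwa [hvb0] at this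
  -- monotonicity helper
  have mono : ∀ (w : ι → ℝ), (∀ x, 0 ≤ w x) → ∀ S T : Finset ι, S ⊆ T →
      val w S ≤ val w T := fun w hw S T hST =>
    Finset.sum_le_sum_of_subset_of_nonneg hST (fun i _ _ => hw i)
  -- g belongs to both minimum preferred sets
  have hgPa : g ∈ Pa := by
    by_contra hgPa
    have hsub : Pa ⊆ X b0 := by
      intro x hx
      rcases Finset.mem_insert.mp (hPa.1 hx) with h | h
      · exact absurd (h ▸ hx) hgPa
      · exact h
    have := mono va hnna Pa (X b0) hsub
    linarith
  have hgPb : g ∈ Pb := by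
    by_contra hgPb
    have hsub : Pb ⊆ X a0 := by
      intro x hx
      rcases Finset.mem_insert.mp (hPb.1 hx) with h | h
      · exact absurd (h ▸ hx) hgPb
      · exact h
    have := mono vb hnnb Pb (X a0) hsub
    linarith
  -- no self-champion consequences
  have hPbleA : val va Pb ≤ val va (X a0) := by
    by_contra h
    push_neg at h
    exact hsc a0 Pb ⟨hPb.1, by rw [hva0]; exact h, hPb.2.2⟩
  have hPaleB : val vb Pa ≤ val vb (X b0) := by
    by_contra h
    push_neg at h
    exact hsc b0 Pa ⟨hPa.1, by rw [hvb0]; exact h, hPa.2.2⟩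
  -- disjointness
  have hdAB : Disjoint (X a0) (X b0) := hdisj _ _ hab
  have hdAPa : Disjoint (X a0) Pa := by
    rw [Finset.disjoint_right]
    intro x hx hxA
    rcases Finset.mem_insert.mp (hPa.1 hx) with h | h
    · exact hg a0 (h ▸ hxA)
    · exact (Finset.disjoint_left.mp hdAB hxA) h
  have hdBPb : Disjoint (X b0) Pb := by
    rw [Finset.disjoint_right]
    intro x hx hxB
    rcases Finset.mem_insert.mp (hPb.1 hx) with h | h
    · exact hg b0 (h ▸ hxB)
    · exact (Finset.disjoint_left.mp hdAB h) hxB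
  have hPbsub : Pb ⊆ X a0 ∪ Pa := by
    intro x hx
    rcases Finset.mem_insert.mp (hPb.1 hx) with h | h
    · exact Finset.mem_union_right _ (h ▸ hgPa)
    · exact Finset.mem_union_left _ h
  have hPasub : Pa ⊆ X b0 ∪ Pb := by
    intro x hx
    rcases Finset.mem_insert.mp (hPa.1 hx) with h | h
    · exact Finset.mem_union_right _ (h ▸ hgPb)
    · exact Finset.mem_union_left _ h
  -- value of the new bundles
  have keyA : ∀ w : ι → ℝ, val w (X' a0) = val w (X a0) + val w Pa - val w Pb := by
    intro w
    have h1 : val w (X a0 ∪ Pa) = val w (X a0) + val w Pa := Finset.sum_union hdAPa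
    have h2 : val w ((X a0 ∪ Pa) \ Pb) + val w Pb = val w (X a0 ∪ Pa) :=
      Finset.sum_sdiff hPbsub
    rw [hX'a]
    unfold _root_.val at *
    linarith
  have keyB : ∀ w : ι → ℝ, val w (X' b0) = val w (X b0) + val w Pb - val w Pa := by
    intro w
    have h1 : val w (X b0 ∪ Pb) = val w (X b0) + val w Pb := Finset.sum_union hdBPb
    have h2 : val w ((X b0 ∪ Pb) \ Pa) + val w Pa = val w (X b0 ∪ Pb) :=
      Finset.sum_sdiff hPasub
    rw [hX'b]
    unfold _root_.val at *
    linarith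
  -- strict middle inequalities
  have hABne : X b0 ≠ X a0 := by
    intro h
    have : X a0 = ∅ := _root_.disjoint_self.mp (h ▸ hdAB)
    exact (hne a0).ne_empty this
  have h2 : val va (X b0) < val va (X a0) := lt_of_le_of_ne hBA (hnda _ _ hABne)
  have h5 : val vb (X a0) < val vb (X b0) :=
    lt_of_le_of_ne hAB (hndb _ _ (fun h => hABne h.symm))
  have h1 : val va (X a0) < val va (X' a0) := by rw [keyA va]; linarith
  have h3 : val va (X' b0) < val va (X b0) := by rw [keyB va]; linarith
  have h4 : val vb (X b0) < val vb (X' b0) := by rw [keyB vb]; linarith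
  have h6 : val vb (X' a0) < val vb (X a0) := by rw [keyA vb]; linarith
  refine ⟨h1, h2, h3, h4, h5, h6, ?_, ⟨a0, ?_⟩⟩
  · intro i
    by_cases hia : i = a0
    · subst hia; rw [hva0]; exact le_of_lt h1
    · by_cases hib : i = b0
      · subst hib; rw [hvb0]; exact le_of_lt h4
      · rw [hX'k i hia hib]
  · rw [hva0]; exact h1
end

section
/- Suppose all n agents share a single additive valuation v and X = (X_1,...,X_n) is a complete EFX allocation with respect to v. Given a second additive valuation w and one distinguished agent a, the allocation that gives agent a the bundle X_k maximizing w(X_k) and distributes the remaining bundles arbitrarily among the other agents is EFX when agent a has valuation w and all other agents have valuation v. -/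
open Finset

/-- Suppose all agents share one additive valuation `v` and `X` is a complete EFX
allocation for `v`. Given a second additive valuation `w` and a distinguished agent
`a`, any reassignment of the bundles (via a permutation `σ`) that gives `a` the
`w`-maximum bundle `X k` is EFX when `a` has valuation `w` and everyone else has `v`. -/
theorem identical_plus_one_efx {N ι : Type*} [Fintype N] [DecidableEq N] [DecidableEq ι]
    (v w : ι → ℝ) (hnnv : ∀ g, 0 ≤ v g) (hnnw : ∀ g, 0 ≤ w g)
    (X : N → Finset ι)
    (hdisj : ∀ i j : N, i ≠ j → Disjoint (X i) (X j))
    (hcomp : ∀ g : ι, ∃ i : N, g ∈ X i)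
    (hEFX : ∀ i j : N, ∀ h ∈ X j, val v ((X j).erase h) ≤ val v (X i))
    (a k : N) (hk : ∀ j : N, val w (X j) ≤ val w (X k))
    (σ : Equiv.Perm N) (hσ : σ a = k) :
    ∀ i j : N, ∀ h ∈ X (σ j),
      val (if i = a then w else v) ((X (σ j)).erase h) ≤
        val (if i = a then w else v) (X (σ i)) := by
  intro i j h hh
  by_cases hi : i = a
  · subst hi
    simp only [if_pos rfl, hσ]
    calc val w ((X (σ j)).erase h) ≤ val w (X (σ j)) :=
          Finset.sum_le_sum_of_subset_of_nonneg (Finset.erase_subset _ _)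
            (fun g _ _ => hnnw g)
      _ ≤ val w (X k) := hk _
  · simp only [if_neg hi]
    exact hEFX (σ i) (σ j) h hh
end

section
/- Let X be a partial allocation in a two-type additive instance, with α_0, β_0 the minimally endowed agents of types α, β, and suppose: v_α(X'_{α_0}) > v_α(X_{α_0}) > v_α(X_{β_0}) > v_α(X'_{β_0}) and v_β(X'_{β_0}) > v_β(X_{β_0}) > v_β(X_{α_0}) > v_β(X'_{α_0}) for the exchanged allocation X'. Define X'' by shrinking X'_{α_0} to P_{X'}(α_1, X'_{α_0}) if α_1 EFX envies α_0 in X' (else keep X'_{α_0}), and symmetrically for β_0, leaving all other bundles unchanged. Then X'' Pareto dominates X and X'' is EFX. -/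
open Finset

/-- `i` EFX envies `j` under allocation `X`. -/
def EFXEnvies {N ι : Type*} [DecidableEq ι] (v : N → ι → ℝ) (X : N → Finset ι)
    (i j : N) : Prop :=
  ∃ h ∈ X j, val (v i) (X i) < val (v i) ((X j).erase h)

/-- Elimination of EFX envy: given the exchanged allocation `X'` satisfying the
inequality chains `v_α(X'_{α₀}) > v_α(X_{α₀}) > v_α(X_{β₀}) > v_α(X'_{β₀})` and
`v_β(X'_{β₀}) > v_β(X_{β₀}) > v_β(X_{α₀}) > v_β(X'_{α₀})`, shrink `X'_{α₀}` to the
minimum preferred set `P_{X'}(α₁, X'_{α₀})` if `α₁` EFX envies `α₀` in `X'` (else keep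
it), and symmetrically for `β₀`. The resulting allocation `X''` Pareto dominates `X`
and is EFX. -/
theorem shrunk_allocation_efx {N ι : Type*} [DecidableEq N] [DecidableEq ι]
    (type : N → Bool) (va vb : ι → ℝ)
    (hnna : ∀ g, 0 ≤ va g) (hnnb : ∀ g, 0 ≤ vb g)
    (hnda : ∀ S T : Finset ι, S ≠ T → val va S ≠ val va T)
    (hndb : ∀ S T : Finset ι, S ≠ T → val vb S ≠ val vb T)
    (v : N → ι → ℝ) (hv : ∀ i : N, v i = if type i then va else vb)
    (X : N → Finset ι)
    (hdisj : ∀ i j : N, i ≠ j → Disjoint (X i) (X j))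
    (hEFX : ∀ i j : N, ∀ h ∈ X j, val (v i) ((X j).erase h) ≤ val (v i) (X i))
    (a0 a1 b0 b1 : N)
    (ha0 : type a0 = true) (ha1 : type a1 = true) (ha01 : a0 ≠ a1)
    (hb0 : type b0 = false) (hb1 : type b1 = false) (hb01 : b0 ≠ b1)
    (ha0min : ∀ i : N, type i = true → val va (X a0) ≤ val va (X i))
    (ha1ord : val va (X a0) < val va (X a1))
    (ha1min : ∀ i : N, type i = true → i ≠ a0 → val va (X a1) ≤ val va (X i))
    (hb0min : ∀ i : N, type i = false → val vb (X b0) ≤ val vb (X i))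
    (hb1ord : val vb (X b0) < val vb (X b1))
    (hb1min : ∀ i : N, type i = false → i ≠ b0 → val vb (X b1) ≤ val vb (X i))
    (X' : N → Finset ι)
    (hX'k : ∀ k : N, k ≠ a0 → k ≠ b0 → X' k = X k)
    (hchain_a : val va (X' b0) < val va (X b0) ∧ val va (X b0) < val va (X a0) ∧
      val va (X a0) < val va (X' a0))
    (hchain_b : val vb (X' a0) < val vb (X a0) ∧ val vb (X a0) < val vb (X b0) ∧
      val vb (X b0) < val vb (X' b0))
    (A'' B'' : Finset ι)
    (hA : (EFXEnvies v X' a1 a0 ∧ A'' ⊆ X' a0 ∧ val va (X' a1) < val va A'' ∧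
        (∀ Q ⊆ X' a0, val va (X' a1) < val va Q → A''.card ≤ Q.card)) ∨
      (¬ EFXEnvies v X' a1 a0 ∧ A'' = X' a0))
    (hB : (EFXEnvies v X' b1 b0 ∧ B'' ⊆ X' b0 ∧ val vb (X' b1) < val vb B'' ∧
        (∀ Q ⊆ X' b0, val vb (X' b1) < val vb Q → B''.card ≤ Q.card)) ∨
      (¬ EFXEnvies v X' b1 b0 ∧ B'' = X' b0))
    (X'' : N → Finset ι)
    (hX''a : X'' a0 = A'') (hX''b : X'' b0 = B'')
    (hX''k : ∀ k : N, k ≠ a0 → k ≠ b0 → X'' k = X' k) :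
    ((∀ i : N, val (v i) (X i) ≤ val (v i) (X'' i)) ∧
      ∃ j : N, val (v j) (X j) < val (v j) (X'' j)) ∧
    (∀ i j : N, ∀ h ∈ X'' j, val (v i) ((X'' j).erase h) ≤ val (v i) (X'' i)) := by

  have hab : a0 ≠ b0 := by intro h; rw [h, hb0] at ha0; exact Bool.noConfusion ha0
  have ha1b0 : a1 ≠ b0 := by intro h; rw [h, hb0] at ha1; exact Bool.noConfusion ha1
  have hb1a0 : b1 ≠ a0 := by intro h; rw [h, ha0] at hb1; exact Bool.noConfusion hb1
  have hX'a1 : X' a1 = X a1 := hX'k a1 (Ne.symm ha01) ha1b0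
  have hX'b1 : X' b1 = X b1 := hX'k b1 hb1a0 (Ne.symm hb01)
  have hva1 : v a1 = va := by rw [hv a1, ha1]; rfl
  have hvb1 : v b1 = vb := by rw [hv b1, hb1]; rfl
  have mono : ∀ (w : ι → ℝ), (∀ g, 0 ≤ w g) → ∀ {S T : Finset ι}, S ⊆ T →
      val w S ≤ val w T := by
    intro w hw S T hST
    exact Finset.sum_le_sum_of_subset_of_nonneg hST (fun g _ _ => hw g)
  have hAsub : A'' ⊆ X' a0 := by
    rcases hA with ⟨_, hsub, _, _⟩ | ⟨_, heq⟩
    · exact hsub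
    · exact heq ▸ Finset.Subset.refl _
  have hBsub : B'' ⊆ X' b0 := by
    rcases hB with ⟨_, hsub, _, _⟩ | ⟨_, heq⟩
    · exact hsub
    · exact heq ▸ Finset.Subset.refl _
  have hAlb : val va (X a0) < val va A'' := by
    rcases hA with ⟨_, _, hgt, _⟩ | ⟨_, heq⟩
    · rw [hX'a1] at hgt; exact ha1ord.trans hgt
    · rw [heq]; exact hchain_a.2.2
  have hBlb : val vb (X b0) < val vb B'' := by
    rcases hB with ⟨_, _, hgt, _⟩ | ⟨_, heq⟩
    · rw [hX'b1] at hgt; exact hb1ord.trans hgt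
    · rw [heq]; exact hchain_b.2.2
  have hAerase : ∀ h ∈ A'', val va (A''.erase h) ≤ val va (X a1) := by
    intro h hh
    rcases hA with ⟨_, hsub, _, hmin⟩ | ⟨hnenv, heq⟩
    · by_contra hc
      push_neg at hc
      have hQ : A''.card ≤ (A''.erase h).card :=
        hmin (A''.erase h) ((Finset.erase_subset h A'').trans hsub)
          (by rw [hX'a1]; exact hc)
      rw [Finset.card_erase_of_mem hh] at hQ
      have : 0 < A''.card := Finset.card_pos.mpr ⟨h, hh⟩
      omega
    · rw [EFXEnvies] at hnenv
      push_neg at hnenv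
      have := hnenv h (heq ▸ hh)
      rw [hva1, hX'a1, ← heq] at this
      exact this
  have hBerase : ∀ h ∈ B'', val vb (B''.erase h) ≤ val vb (X b1) := by
    intro h hh
    rcases hB with ⟨_, hsub, _, hmin⟩ | ⟨hnenv, heq⟩
    · by_contra hc
      push_neg at hc
      have hQ : B''.card ≤ (B''.erase h).card :=
        hmin (B''.erase h) ((Finset.erase_subset h B'').trans hsub)
          (by rw [hX'b1]; exact hc)
      rw [Finset.card_erase_of_mem hh] at hQ
      have : 0 < B''.card := Finset.card_pos.mpr ⟨h, hh⟩
      omega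
    · rw [EFXEnvies] at hnenv
      push_neg at hnenv
      have := hnenv h (heq ▸ hh)
      rw [hvb1, hX'b1, ← heq] at this
      exact this
  have hva0 : v a0 = va := by simp [hv a0, ha0]
  have hvb0 : v b0 = vb := by simp [hv b0, hb0]
  have part1 : ∀ i : N, val (v i) (X i) ≤ val (v i) (X'' i) := by
    intro i
    by_cases hia : i = a0
    · subst hia; rw [hX''a, hva0]; exact hAlb.le
    by_cases hib : i = b0
    · subst hib; rw [hX''b, hvb0]; exact hBlb.le
    rw [hX''k i hia hib, hX'k i hia hib]
  refine ⟨⟨part1, ⟨a0, ?_⟩⟩, ?_⟩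
  · rw [hX''a, hva0]; exact hAlb
  intro i j h hh
  by_cases hja : j = a0
  · rw [hja] at hh ⊢
    rw [hX''a] at hh ⊢
    by_cases hit : type i = true
    · have hvi : v i = va := by simp [hv i, hit]
      by_cases hia : i = a0
      · rw [hia, hX''a, hva0]
        exact mono va hnna (Finset.erase_subset h A'')
      · rw [hvi]
        calc val va (A''.erase h) ≤ val va (X a1) := hAerase h hh
          _ ≤ val va (X i) := ha1min i hit hia
          _ ≤ val va (X'' i) := by have := part1 i; rwa [hvi] at this
    · have hif : type i = false := Bool.eq_false_iff.mpr hit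
      have hvi : v i = vb := by simp [hv i, hif]
      rw [hvi]
      calc val vb (A''.erase h) ≤ val vb A'' := mono vb hnnb (Finset.erase_subset h A'')
        _ ≤ val vb (X' a0) := mono vb hnnb hAsub
        _ ≤ val vb (X b0) := (hchain_b.1.trans hchain_b.2.1).le
        _ ≤ val vb (X i) := hb0min i hif
        _ ≤ val vb (X'' i) := by have := part1 i; rwa [hvi] at this
  by_cases hjb : j = b0
  · rw [hjb] at hh ⊢
    rw [hX''b] at hh ⊢
    by_cases hit : type i = true
    · have hvi : v i = va := by simp [hv i, hit]
      rw [hvi]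
      calc val va (B''.erase h) ≤ val va B'' := mono va hnna (Finset.erase_subset h B'')
        _ ≤ val va (X' b0) := mono va hnna hBsub
        _ ≤ val va (X a0) := (hchain_a.1.trans hchain_a.2.1).le
        _ ≤ val va (X i) := ha0min i hit
        _ ≤ val va (X'' i) := by have := part1 i; rwa [hvi] at this
    · have hif : type i = false := Bool.eq_false_iff.mpr hit
      have hvi : v i = vb := by simp [hv i, hif]
      by_cases hib : i = b0
      · rw [hib, hX''b, hvb0]
        exact mono vb hnnb (Finset.erase_subset h B'')
      · rw [hvi]
        calc val vb (B''.erase h) ≤ val vb (X b1) := hBerase h hh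
          _ ≤ val vb (X i) := hb1min i hif hib
          _ ≤ val vb (X'' i) := by have := part1 i; rwa [hvi] at this
  · rw [hX''k j hja hjb, hX'k j hja hjb] at hh ⊢
    calc val (v i) ((X j).erase h) ≤ val (v i) (X i) := hEFX i j h hh
      _ ≤ val (v i) (X'' i) := part1 i
end
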